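/- Let A be an m×m zeon matrix with A† = A (self-adjoint with respect to the inner product ⟨x|y⟩ = y†x on CZ^m). If λ₁ and λ₂ are zeon eigenvalues of A with eigenvectors v₁, v₂ such that the scalar parts Cλ₁ ≠ Cλ₂, then v₁ and v₂ are orthogonal: ⟨v₁|v₂⟩ = 0. -/

import Mathlib

open scoped BigOperators

noncomputable section

/-- The ideal of squares of generators in the polynomial ring. -/
def zeonIdeal (n : ℕ) : Ideal (MvPolynomial (Fin n) ℂ) :=
  Ideal.span {p : MvPolynomial (Fin n) ℂ | ∃ i : Fin n, p = MvPolynomial.X i ^ 2}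

/-- The `n`-particle complex zeon algebra. -/
abbrev Zeon (n : ℕ) := MvPolynomial (Fin n) ℂ ⧸ zeonIdeal n

/-- The zeon generators. -/
def zeta (n : ℕ) (i : Fin n) : Zeon n := Ideal.Quotient.mk _ (MvPolynomial.X i)

/-- Basis blades. -/
def zetaBlade (n : ℕ) (I : Finset (Fin n)) : Zeon n := ∏ i ∈ I, zeta n i

/-- Scalar part map. -/
def scalarPart (n : ℕ) : Zeon n →+* ℂ :=
  Ideal.Quotient.lift _ (MvPolynomial.aeval (fun _ : Fin n => (0:ℂ))).toRingHom
    (fun a ha => by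
      have h : zeonIdeal n ≤
          RingHom.ker (MvPolynomial.aeval (fun _ : Fin n => (0:ℂ))).toRingHom := by
        rw [zeonIdeal, Ideal.span_le]
        rintro p ⟨i, rfl⟩
        simp [RingHom.mem_ker]
      exact h ha)

/-- Dual (nilpotent) part. -/
def dualPart (n : ℕ) (u : Zeon n) : Zeon n := u - algebraMap ℂ (Zeon n) (scalarPart n u)

/-- Conjugation on zeons: conjugate the complex coefficients, fix the generators. -/
def zconj (n : ℕ) : Zeon n →+* Zeon n :=
  Ideal.Quotient.lift _
    ((Ideal.Quotient.mk (zeonIdeal n)).comp (MvPolynomial.map (starRingEnd ℂ)))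
    (fun a ha => by
      have h : zeonIdeal n ≤ RingHom.ker
          ((Ideal.Quotient.mk (zeonIdeal n)).comp (MvPolynomial.map (starRingEnd ℂ))) := by
        rw [zeonIdeal, Ideal.span_le]
        rintro p ⟨i, rfl⟩
        simp only [Set.mem_setOf_eq, SetLike.mem_coe, RingHom.mem_ker, RingHom.comp_apply,
          map_pow, MvPolynomial.map_X]
        rw [← map_pow, Ideal.Quotient.eq_zero_iff_mem]
        exact Ideal.subset_span ⟨i, rfl⟩
      exact h ha)

end

section Aux

open MvPolynomial

lemma scalarPart_mk (n : ℕ) (p : MvPolynomial (Fin n) ℂ) :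
    scalarPart n (Ideal.Quotient.mk _ p) = constantCoeff p := by
  simp [scalarPart]

lemma zconj_mk (n : ℕ) (p : MvPolynomial (Fin n) ℂ) :
    zconj n (Ideal.Quotient.mk _ p) =
      Ideal.Quotient.mk _ (MvPolynomial.map (starRingEnd ℂ) p) := by
  exact Ideal.Quotient.lift_mk _ _ _

lemma scalarPart_zconj (n : ℕ) (u : Zeon n) :
    scalarPart n (zconj n u) = starRingEnd ℂ (scalarPart n u) := by
  obtain ⟨p, rfl⟩ := Ideal.Quotient.mk_surjective u
  rw [zconj_mk, scalarPart_mk, scalarPart_mk, constantCoeff_map]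

/-- The ideal of polynomials all of whose monomials have total degree ≥ k. -/
private noncomputable def degIdeal (n k : ℕ) : Ideal (MvPolynomial (Fin n) ℂ) :=
  Ideal.span ((fun d => monomial d (1:ℂ)) '' {d : Fin n →₀ ℕ | k ≤ d.sum fun _ e => e})

private lemma degIdeal_mul_le (n a b : ℕ) :
    degIdeal n a * degIdeal n b ≤ degIdeal n (a + b) := by
  rw [Ideal.mul_le]
  intro r hr s hs
  refine mem_ideal_span_monomial_image.mpr ?_
  intro m hm
  obtain ⟨m₁, hm₁, m₂, hm₂, rfl⟩ := Finset.mem_add.mp (support_mul r s hm)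
  obtain ⟨d₁, hd₁, hle₁⟩ := mem_ideal_span_monomial_image.mp hr m₁ hm₁
  obtain ⟨d₂, hd₂, hle₂⟩ := mem_ideal_span_monomial_image.mp hs m₂ hm₂
  refine ⟨d₁ + d₂, ?_, add_le_add hle₁ hle₂⟩
  have hsum : ((d₁ + d₂).sum fun _ e => e) = (d₁.sum fun _ e => e) + d₂.sum fun _ e => e :=
    Finsupp.sum_add_index' (fun _ => rfl) (fun _ _ _ => rfl)
  simp only [Set.mem_setOf_eq, hsum]
  exact add_le_add hd₁ hd₂

private lemma pow_le_degIdeal (n : ℕ) : ∀ k, (degIdeal n 1) ^ k ≤ degIdeal n k := by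
  intro k
  induction k with
  | zero =>
    intro x _
    refine mem_ideal_span_monomial_image.mpr fun m _ => ⟨0, by simp, zero_le⟩
  | succ k ih =>
    calc degIdeal n 1 ^ (k + 1) = degIdeal n 1 ^ k * degIdeal n 1 := pow_succ _ _
    _ ≤ degIdeal n k * degIdeal n 1 := Ideal.mul_mono_left ih
    _ ≤ degIdeal n (k + 1) := degIdeal_mul_le n k 1

private lemma degIdeal_le_zeonIdeal (n : ℕ) : degIdeal n (n + 1) ≤ zeonIdeal n := by
  intro q hq
  have hspan : zeonIdeal n = Ideal.span ((fun d => monomial d (1:ℂ)) ''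
      (Set.range fun i : Fin n => Finsupp.single i 2)) := by
    unfold zeonIdeal
    congr 1
    ext r
    constructor
    · rintro ⟨i, rfl⟩
      exact ⟨Finsupp.single i 2, ⟨i, rfl⟩, X_pow_eq_monomial.symm⟩
    · rintro ⟨d, ⟨i, rfl⟩, rfl⟩
      exact ⟨i, X_pow_eq_monomial.symm⟩
  rw [hspan]
  refine mem_ideal_span_monomial_image.mpr ?_
  intro m hm
  obtain ⟨d, hd, hdm⟩ := mem_ideal_span_monomial_image.mp hq m hm
  have hpigeon : ∃ i, 2 ≤ d i := by
    by_contra h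
    push_neg at h
    have h1 : (d.sum fun _ e => e) ≤ d.support.card * 1 := by
      rw [Finsupp.sum]
      refine Finset.sum_le_card_nsmul _ _ 1 fun i _ => ?_
      have := h i; omega
    have h2 : d.support.card ≤ n := by
      simpa using Finset.card_le_univ d.support
    have := hd
    simp only [Set.mem_setOf_eq] at this
    omega
  obtain ⟨i, hi⟩ := hpigeon
  exact ⟨Finsupp.single i 2, ⟨i, rfl⟩, Finsupp.single_le_iff.mpr (le_trans hi (hdm i))⟩

lemma isNilpotent_of_scalarPart_eq_zero {n : ℕ} {u : Zeon n}
    (h : scalarPart n u = 0) : IsNilpotent u := by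
  obtain ⟨p, rfl⟩ := Ideal.Quotient.mk_surjective u
  rw [scalarPart_mk] at h
  have hp : p ∈ degIdeal n 1 := by
    refine mem_ideal_span_monomial_image.mpr fun m hm => ?_
    refine ⟨m, ?_, le_rfl⟩
    have hm0 : m ≠ 0 := by
      rintro rfl
      rw [mem_support_iff] at hm
      rw [constantCoeff_eq] at h
      exact hm h
    obtain ⟨i, hi⟩ := Finsupp.ne_iff.mp hm0
    simp only [Finsupp.coe_zero, Pi.zero_apply] at hi
    have : 1 ≤ m i := Nat.one_le_iff_ne_zero.mpr hi
    have hmem : i ∈ m.support := Finsupp.mem_support_iff.mpr hi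
    calc 1 ≤ m i := this
    _ ≤ m.sum fun _ e => e := Finset.single_le_sum (fun _ _ => Nat.zero_le _) hmem
  refine ⟨n + 1, ?_⟩
  rw [← map_pow, Ideal.Quotient.eq_zero_iff_mem]
  exact degIdeal_le_zeonIdeal n (pow_le_degIdeal n (n + 1) (Ideal.pow_mem_pow hp (n + 1)))

lemma scalarPart_algebraMap (n : ℕ) (c : ℂ) :
    scalarPart n (algebraMap ℂ (Zeon n) c) = c := by
  have : algebraMap ℂ (Zeon n) c =
      Ideal.Quotient.mk (zeonIdeal n) (MvPolynomial.C c) := rfl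
  rw [this, scalarPart_mk, constantCoeff_C]

lemma isUnit_of_scalarPart_ne_zero {n : ℕ} {u : Zeon n}
    (h : scalarPart n u ≠ 0) : IsUnit u := by
  have h1 : scalarPart n (u - algebraMap ℂ (Zeon n) (scalarPart n u)) = 0 := by
    rw [map_sub, scalarPart_algebraMap, sub_self]
  have h2 := isNilpotent_of_scalarPart_eq_zero h1
  have h3 : IsUnit (algebraMap ℂ (Zeon n) (scalarPart n u)) :=
    (isUnit_iff_ne_zero.mpr h).map (algebraMap ℂ (Zeon n))
  have := h2.isUnit_add_left_of_commute h3 (Commute.all _ _)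
  simpa using this

end Aux

set_option maxHeartbeats 1600000 in
/-- eigenvectors of a self-adjoint zeon matrix whose eigenvalues
have distinct scalar parts are orthogonal with respect to `⟨x|y⟩ = y† x`. -/
theorem selfAdjoint_zeon_eigenvectors_orthogonal (n m : ℕ)
    (A : Matrix (Fin m) (Fin m) (Zeon n))
    (hA : ∀ i j, A i j = zconj n (A j i))
    (lam₁ lam₂ : Zeon n) (v₁ v₂ : Fin m → Zeon n)
    (h₁ : A.mulVec v₁ = lam₁ • v₁)
    (h₂ : A.mulVec v₂ = lam₂ • v₂)
    (hn₁ : scalarPart n (∑ i, zconj n (v₁ i) * v₁ i) ≠ 0)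
    (hn₂ : scalarPart n (∑ i, zconj n (v₂ i) * v₂ i) ≠ 0)
    (hne : scalarPart n lam₁ ≠ scalarPart n lam₂) :
    ∑ i, zconj n (v₂ i) * v₁ i = 0 := by
  have key : ∀ (x y : Fin m → Zeon n) (lx ly : Zeon n),
      A.mulVec x = lx • x → A.mulVec y = ly • y →
      lx * (∑ i, zconj n (y i) * x i) = zconj n ly * ∑ i, zconj n (y i) * x i := by
    intro x y lx ly hx hy
    have inner : ∀ j, (∑ i, zconj n (y i) * A i j) = zconj n ly * zconj n (y j) := by
      intro j
      have : (∑ i, zconj n (y i) * A i j) = zconj n ((A.mulVec y) j) := by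
        rw [Matrix.mulVec, dotProduct, map_sum]
        refine Finset.sum_congr rfl fun i _ => ?_
        rw [hA i j, ← map_mul, mul_comm]
      rw [this, hy, Pi.smul_apply, smul_eq_mul, map_mul]
    calc lx * ∑ i, zconj n (y i) * x i
        = ∑ i, zconj n (y i) * (lx • x) i := by
          rw [Finset.mul_sum]
          exact Finset.sum_congr rfl fun i _ => by
            simp only [Pi.smul_apply, smul_eq_mul]; ring
      _ = ∑ i, zconj n (y i) * (A.mulVec x) i := by rw [hx]
      _ = ∑ i, ∑ j, zconj n (y i) * (A i j * x j) := by
          refine Finset.sum_congr rfl fun i _ => ?_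
          rw [Matrix.mulVec, dotProduct, Finset.mul_sum]
      _ = ∑ j, (∑ i, zconj n (y i) * A i j) * x j := by
          rw [Finset.sum_comm]
          refine Finset.sum_congr rfl fun j _ => ?_
          rw [Finset.sum_mul]
          exact Finset.sum_congr rfl fun i _ => by ring
      _ = ∑ j, zconj n ly * (zconj n (y j) * x j) := by
          refine Finset.sum_congr rfl fun j _ => ?_
          rw [inner j]; ring
      _ = zconj n ly * ∑ i, zconj n (y i) * x i := by rw [Finset.mul_sum]
  -- lam₂ has real scalar part
  have hreal : starRingEnd ℂ (scalarPart n lam₂) = scalarPart n lam₂ := by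
    have h22 := key v₂ v₂ lam₂ lam₂ h₂ h₂
    have := congrArg (scalarPart n) h22
    rw [map_mul, map_mul, scalarPart_zconj] at this
    exact (mul_right_cancel₀ hn₂ this).symm
  have h12 := key v₁ v₂ lam₁ lam₂ h₁ h₂
  have hzero : (lam₁ - zconj n lam₂) * ∑ i, zconj n (v₂ i) * v₁ i = 0 := by
    rw [sub_mul, h12, sub_self]
  have hunit : IsUnit (lam₁ - zconj n lam₂) := by
    refine isUnit_of_scalarPart_ne_zero ?_
    rw [map_sub, scalarPart_zconj, hreal]
    exact sub_ne_zero_of_ne hne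
  exact (hunit.mul_right_eq_zero).mp hzero
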